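/- Let m be a nonnegative smooth solution on (0,T)×T^d of ∂_t m − νΔm + (1/ε)1_A m − (1/ε)(1_A m)(t, x−ξ) = 0, where A ⊂ (0,T)×T^d is measurable, ξ ∈ T^d and ε > 0. Let k : T^d → ℝ with k ≥ 0 on A, and let u ∈ L²((0,T),H¹(T^d)) with ∂_t u ∈ L²((0,T),H⁻¹) satisfy u(t,x) ≤ k(x) + u(t, x+ξ) almost everywhere on A. Then ∫₀ᵀ∫_{T^d} (∂_t m − νΔm) u dx dt + (1/ε)∫_A k m dx dt ≥ 0. -/

import Mathlib

open MeasureTheory Set Filter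
noncomputable section

open Topology ENNReal

namespace Stmt0Aux

variable {α : Type*} [MeasurableSpace α] {μ : Measure α}

/-- transport an a.e. property through a measure-preserving map -/
theorem ae_comp_mp {f : α → α} (hf : MeasurePreserving f μ μ) {p : α → Prop}
    (h : ∀ᵐ y ∂μ, p y) : ∀ᵐ x ∂μ, p (f x) := by
  rw [ae_iff] at h ⊢
  exact hf.quasiMeasurePreserving.preimage_null h

theorem measure_inter_le {W W' T : Set α} (h1 : μ (W \ W') = 0) :
    μ (W ∩ T) ≤ μ (W' ∩ T) := by
  calc μ (W ∩ T) ≤ μ ((W' ∩ T) ∪ (W \ W')) := by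
        apply measure_mono
        rintro x ⟨hW, hT⟩
        by_cases hx : x ∈ W'
        · exact Or.inl ⟨hx, hT⟩
        · exact Or.inr ⟨hW, hx⟩
    _ ≤ μ (W' ∩ T) + μ (W \ W') := measure_union_le _ _
    _ = μ (W' ∩ T) := by rw [h1, add_zero]

theorem measure_inter_congr {W W' T : Set α} (h1 : μ (W \ W') = 0) (h2 : μ (W' \ W) = 0) :
    μ (W ∩ T) = μ (W' ∩ T) :=
  le_antisymm (measure_inter_le h1) (measure_inter_le h2)

theorem telescope {a c : ℕ → ℝ} (h : ∀ n, c n - c (n + 1) ≤ a (n + 1)) (N : ℕ) :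
    c 0 - c N ≤ ∑ j ∈ Finset.range N, a (j + 1) := by
  induction N with
  | zero => simp
  | succ N ih => rw [Finset.sum_range_succ]; have := h N; linarith

section cancel

variable {φ ψ : α → α}

theorem psi_phi_iter (hψφ : ∀ x, ψ (φ x) = x) (n : ℕ) (x : α) :
    ψ (φ^[n + 1] x) = φ^[n] x := by
  rw [Function.iterate_succ_apply']; exact hψφ _

theorem phi_psi_cancel (hφψ : ∀ x, φ (ψ x) = x) :
    ∀ j k, j ≤ k → ∀ x, φ^[j] (ψ^[k] x) = ψ^[k - j] x := by
  intro j
  induction j with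
  | zero => simp
  | succ j ih =>
    intro k hk x
    obtain ⟨m, rfl⟩ : ∃ m, k = m + 1 := ⟨k - 1, by omega⟩
    rw [Function.iterate_succ_apply, Function.iterate_succ_apply' (f := ψ), hφψ,
      ih m (by omega) x]
    congr 1
    omega

end cancel

/-- summability of level-set measures of an integrable function -/
theorem sum_measure_le {w : α → ℝ} (hwm : Measurable w) (hw : Integrable w μ) :
    ∑' n : ℕ, μ {x | (n : ℝ) + 1 ≤ w x} ≠ ∞ := by
  have hms : ∀ n : ℕ, MeasurableSet {x | (n : ℝ) + 1 ≤ w x} := by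
    intro n
    exact measurableSet_le measurable_const hwm
  have h1 : ∀ n : ℕ, μ {x | (n : ℝ) + 1 ≤ w x}
      = ∫⁻ x, Set.indicator {x | (n : ℝ) + 1 ≤ w x} 1 x ∂μ := by
    intro n; rw [lintegral_indicator_one (hms n)]
  have h2 : ∑' n : ℕ, μ {x | (n : ℝ) + 1 ≤ w x}
      = ∫⁻ x, ∑' n : ℕ, Set.indicator {x | (n : ℝ) + 1 ≤ w x} (1 : α → ℝ≥0∞) x ∂μ :=
    (tsum_congr h1).trans
      (lintegral_tsum (fun n => ((measurable_one).indicator (hms n)).aemeasurable)).symm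
  rw [h2]
  have hpt : ∀ x, ∑' n : ℕ, Set.indicator {x | (n : ℝ) + 1 ≤ w x} (1 : α → ℝ≥0∞) x
      ≤ ENNReal.ofReal (w x) := by
    intro x
    have hval : ∀ n : ℕ, Set.indicator {x | (n : ℝ) + 1 ≤ w x} (1 : α → ℝ≥0∞) x
        = if n < Nat.floor (w x) then 1 else 0 := by
      intro n
      simp only [Set.indicator_apply, Set.mem_setOf_eq, Pi.one_apply]
      by_cases hn : (n : ℝ) + 1 ≤ w x
      · rw [if_pos hn, if_pos]
        have : ((n + 1 : ℕ) : ℝ) ≤ w x := by push_cast; linarith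
        have := Nat.le_floor this
        omega
      · rw [if_neg hn, if_neg]
        intro hlt
        have h1 : ((n+1 : ℕ) : ℝ) ≤ w x := by
          have hfl : (n+1 : ℕ) ≤ Nat.floor (w x) := by omega
          calc ((n+1 : ℕ) : ℝ) ≤ (Nat.floor (w x) : ℝ) := by exact_mod_cast hfl
            _ ≤ w x := Nat.floor_le (by
                by_contra hneg
                push_neg at hneg
                rw [Nat.floor_of_nonpos hneg.le] at hlt; omega)
        push_cast at h1
        linarith
    calc ∑' n : ℕ, Set.indicator {x | (n : ℝ) + 1 ≤ w x} (1 : α → ℝ≥0∞) x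
        = ∑' n : ℕ, if n < Nat.floor (w x) then (1:ℝ≥0∞) else 0 := tsum_congr hval
      _ = ∑ n ∈ Finset.range (Nat.floor (w x)), (if n < Nat.floor (w x) then (1:ℝ≥0∞) else 0) := by
          apply tsum_eq_sum
          intro n hn
          rw [if_neg]
          simpa using hn
      _ = ∑ n ∈ Finset.range (Nat.floor (w x)), (1:ℝ≥0∞) := by
          apply Finset.sum_congr rfl
          intro n hn
          rw [if_pos (Finset.mem_range.1 hn)]
      _ = (Nat.floor (w x) : ℝ≥0∞) := by simp
      _ ≤ ENNReal.ofReal (w x) := by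
          by_cases hwx : 0 ≤ w x
          · rw [← ENNReal.ofReal_natCast]
            exact ENNReal.ofReal_le_ofReal (Nat.floor_le hwx)
          · push_neg at hwx
            rw [Nat.floor_of_nonpos hwx.le]
            simp
  have hle : ∫⁻ x, ∑' n : ℕ, Set.indicator {x | (n : ℝ) + 1 ≤ w x} (1 : α → ℝ≥0∞) x ∂μ
      ≤ ∫⁻ x, ENNReal.ofReal (w x) ∂μ := lintegral_mono hpt
  have hfin : ∫⁻ x, ENNReal.ofReal (w x) ∂μ < ∞ := by
    have habs := hw.abs.2
    rw [hasFiniteIntegral_iff_ofReal (Eventually.of_forall fun x => abs_nonneg (w x))] at habs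
    calc ∫⁻ x, ENNReal.ofReal (w x) ∂μ ≤ ∫⁻ x, ENNReal.ofReal |w x| ∂μ :=
          lintegral_mono fun x => ENNReal.ofReal_le_ofReal (le_abs_self _)
      _ < ∞ := habs
  exact ne_of_lt (lt_of_le_of_lt hle hfin)

/-- along orbits of a measure preserving map, an integrable function is o(n) -/
theorem orbit_ae_tendsto [IsFiniteMeasure μ] {φ : α → α} (hφm : Measurable φ)
    (hφ : MeasurePreserving φ μ μ) {v : α → ℝ} (hvm : Measurable v) (hv : Integrable v μ) :
    ∀ᵐ x ∂μ, Tendsto (fun n : ℕ => v (φ^[n] x) / n) atTop (𝓝 0) := by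
  have key : ∀ c : ℝ, 0 < c → ∀ᵐ x ∂μ, ∀ᶠ n : ℕ in atTop, |v (φ^[n] x)| < c * (n + 1) := by
    intro c hc
    set s : ℕ → Set α := fun n => (φ^[n]) ⁻¹' {y | (n : ℝ) + 1 ≤ |v y| / c} with hs
    have hsm : ∀ n : ℕ, MeasurableSet {y | (n : ℝ) + 1 ≤ |v y| / c} := fun n =>
      measurableSet_le measurable_const (hvm.abs.div_const c)
    have hsum : (∑' n, μ (s n)) ≠ ∞ := by
      have heq : ∀ n, μ (s n) = μ {y | (n : ℝ) + 1 ≤ |v y| / c} := fun n =>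
        (hφ.iterate n).measure_preimage (hsm n).nullMeasurableSet
      rw [tsum_congr heq]
      exact sum_measure_le (hvm.abs.div_const c) (hv.abs.div_const c)
    filter_upwards [ae_eventually_notMem hsum] with x hx
    filter_upwards [hx] with n hn
    have : ¬ ((n : ℝ) + 1 ≤ |v (φ^[n] x)| / c) := hn
    push_neg at this
    rw [div_lt_iff₀ hc] at this
    linarith [this]
  have key2 : ∀ᵐ x ∂μ, ∀ k : ℕ, ∀ᶠ n : ℕ in atTop,
      |v (φ^[n] x)| < (1 / ((k:ℝ) + 1)) * (n + 1) := by
    rw [ae_all_iff]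
    intro k
    exact key (1 / ((k:ℝ)+1)) (by positivity)
  filter_upwards [key2] with x hx
  rw [Metric.tendsto_atTop]
  intro εr hεr
  obtain ⟨k, hk⟩ := exists_nat_gt (2 / εr)
  have hk' : 2 / ((k:ℝ) + 1) < εr := by
    rw [div_lt_iff₀ (by positivity)]
    rw [div_lt_iff₀ hεr] at hk
    nlinarith [hk]
  obtain ⟨N, hN⟩ := (hx k).exists_forall_of_atTop
  refine ⟨max N 1, fun n hn => ?_⟩
  have hn1 : 1 ≤ n := le_trans (le_max_right _ _) hn
  have hnN : N ≤ n := le_trans (le_max_left _ _) hn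
  have h1 : |v (φ^[n] x)| < (1 / ((k:ℝ)+1)) * (n + 1) := hN n hnN
  have hnpos : (0:ℝ) < n := by exact_mod_cast hn1
  rw [Real.dist_eq, sub_zero, abs_div, abs_of_nonneg (by positivity : (0:ℝ) ≤ (n:ℝ))]
  rw [div_lt_iff₀ hnpos]
  have hle : (n:ℝ) + 1 ≤ 2 * n := by
    have : (1:ℝ) ≤ n := by exact_mod_cast hn1
    linarith
  calc |v (φ^[n] x)| < (1 / ((k:ℝ)+1)) * (n + 1) := h1
    _ ≤ (1 / ((k:ℝ)+1)) * (2 * n) := by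
        apply mul_le_mul_of_nonneg_left hle (by positivity)
    _ = (2 / ((k:ℝ)+1)) * n := by ring
    _ < εr * n := by
        apply mul_lt_mul_of_pos_right hk' hnpos

/-- Garsia's recursive maximum -/
def garsia (φ : α → α) (f : α → ℝ) : ℕ → α → ℝ
  | 0 => fun _ => 0
  | (N+1) => fun x => max 0 (f x + garsia φ f N (φ x))

section met

variable {φ : α → α} {f : α → ℝ}

theorem garsia_zero (x : α) : garsia φ f 0 x = 0 := rfl

theorem garsia_succ (N : ℕ) (x : α) :
    garsia φ f (N+1) x = max 0 (f x + garsia φ f N (φ x)) := rfl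

theorem garsia_nonneg (N : ℕ) (x : α) : 0 ≤ garsia φ f N x := by
  cases N with
  | zero => rw [garsia_zero]
  | succ N => rw [garsia_succ]; exact le_max_left _ _


theorem garsia_mono (N : ℕ) (x : α) : garsia φ f N x ≤ garsia φ f (N+1) x := by
  induction N generalizing x with
  | zero => rw [garsia_zero]; exact garsia_nonneg 1 x
  | succ N ih =>
    rw [garsia_succ, garsia_succ]
    exact max_le_max le_rfl (by linarith [ih (φ x)])

theorem garsia_measurable (hφ : Measurable φ) (hf : Measurable f) (N : ℕ) :
    Measurable (garsia φ f N) := by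
  induction N with
  | zero =>
    have : garsia φ f 0 = fun _ => (0:ℝ) := rfl
    rw [this]; exact measurable_const
  | succ N ih =>
    have : garsia φ f (N+1) = fun x => max 0 (f x + garsia φ f N (φ x)) := rfl
    rw [this]
    exact measurable_const.max (hf.add (ih.comp hφ))

theorem sum_le_garsia (N : ℕ) (x : α) :
    ∑ j ∈ Finset.range N, f (φ^[j] x) ≤ garsia φ f N x := by
  induction N generalizing x with
  | zero => rw [garsia_zero]; simp
  | succ N ih =>
    rw [Finset.sum_range_succ']
    simp only [Function.iterate_succ_apply, Function.iterate_zero_apply]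
    have := ih (φ x)
    calc (∑ j ∈ Finset.range N, f (φ^[j] (φ x))) + f x
        ≤ garsia φ f N (φ x) + f x := by linarith
      _ ≤ garsia φ f (N+1) x := by
          rw [garsia_succ, add_comm]
          exact le_max_right _ _

/-- Hopf's maximal ergodic theorem, corollary form -/
theorem met [IsFiniteMeasure μ] (hφm : Measurable φ) (hφ : MeasurePreserving φ μ μ)
    (hfm : Measurable f) (hfi : Integrable f μ)
    (h : ∀ᵐ x ∂μ, ∃ N : ℕ, 0 < ∑ j ∈ Finset.range N, f (φ^[j] x)) :
    0 ≤ ∫ x, f x ∂μ := by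
  have hGi : ∀ N, Integrable (garsia φ f N) μ := by
    intro N
    induction N with
    | zero => exact (integrable_const 0).congr (Eventually.of_forall fun x => (garsia_zero x).symm)
    | succ N ih =>
      have hcomp : Integrable (fun x => garsia φ f N (φ x)) μ :=
        (hφ.integrable_comp (ih.1)).2 ih
      have hmax : Integrable ((fun _ => (0:ℝ)) ⊔ (fun x => f x + garsia φ f N (φ x))) μ :=
        (integrable_const (0:ℝ)).sup (hfi.add hcomp)
      exact hmax.congr (Eventually.of_forall fun x => rfl)
  have hGcm : ∀ N, Measurable fun x => garsia φ f N (φ x) := fun N =>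
    (garsia_measurable hφm hfm N).comp hφm
  set E : ℕ → Set α := fun N => {x | 0 < f x + garsia φ f N (φ x)} with hE
  have hEm : ∀ N, MeasurableSet (E N) :=
    fun N => measurableSet_lt measurable_const (hfm.add (hGcm N))
  have hEmono : Monotone E := by
    intro N M hNM x hx
    simp only [hE, Set.mem_setOf_eq] at hx ⊢
    have : garsia φ f N (φ x) ≤ garsia φ f M (φ x) := by
      clear hx
      induction hNM with
      | refl => exact le_refl _
      | step h ih => exact le_trans ih (garsia_mono _ _)
    linarith
  have hcompint : ∀ N, ∫ x, garsia φ f N (φ x) ∂μ = ∫ x, garsia φ f N x ∂μ := by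
    intro N
    calc ∫ x, garsia φ f N (φ x) ∂μ
        = ∫ y, garsia φ f N y ∂(Measure.map φ μ) :=
          (integral_map hφm.aemeasurable
            (garsia_measurable hφm hfm N).aestronglyMeasurable).symm
      _ = ∫ y, garsia φ f N y ∂μ := by rw [hφ.map_eq]
  have hstep : ∀ N, 0 ≤ ∫ x in E N, f x ∂μ := by
    intro N
    have hEeq : ∀ x ∈ E N, f x = garsia φ f (N+1) x - garsia φ f N (φ x) := by
      intro x hx
      have hx' : 0 < f x + garsia φ f N (φ x) := hx
      rw [garsia_succ, max_eq_right hx'.le]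
      ring
    have h1 : ∫ x in E N, f x ∂μ
        = ∫ x in E N, (garsia φ f (N+1) x - garsia φ f N (φ x)) ∂μ :=
      setIntegral_congr_fun (hEm N) hEeq
    have h2 : ∫ x in E N, (garsia φ f (N+1) x - garsia φ f N (φ x)) ∂μ
        = (∫ x in E N, garsia φ f (N+1) x ∂μ) - ∫ x in E N, garsia φ f N (φ x) ∂μ :=
      integral_sub ((hGi (N+1)).restrict) (((hφ.integrable_comp (hGi N).1).2 (hGi N)).restrict)
    have h3 : ∫ x in E N, garsia φ f (N+1) x ∂μ = ∫ x, garsia φ f (N+1) x ∂μ := by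
      rw [← integral_add_compl (hEm N) (hGi (N+1))]
      have hzero : ∫ x in (E N)ᶜ, garsia φ f (N+1) x ∂μ = 0 := by
        rw [setIntegral_congr_fun (hEm N).compl (g := fun _ => (0:ℝ))]
        · exact integral_zero _ _
        · intro x hx
          simp only [hE, Set.mem_compl_iff, Set.mem_setOf_eq, not_lt] at hx
          rw [garsia_succ]
          exact max_eq_left hx
      rw [hzero, add_zero]
    have h4 : ∫ x in E N, garsia φ f N (φ x) ∂μ ≤ ∫ x, garsia φ f N (φ x) ∂μ :=
      setIntegral_le_integral ((hφ.integrable_comp (hGi N).1).2 (hGi N))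
        (Eventually.of_forall fun x => garsia_nonneg N (φ x))
    have h5 : ∫ x, garsia φ f N x ∂μ ≤ ∫ x, garsia φ f (N+1) x ∂μ :=
      integral_mono (hGi N) (hGi (N+1)) (fun x => garsia_mono N x)
    rw [h1, h2]
    rw [hcompint N] at h4
    linarith
  -- the union
  have hsub : ∀ᵐ x ∂μ, x ∈ ⋃ N, E N := by
    filter_upwards [h] with x hx
    obtain ⟨N, hN⟩ := hx
    rcases N with - | N
    · simp at hN
    · refine Set.mem_iUnion.2 ⟨N, ?_⟩
      have h1 : ∑ j ∈ Finset.range (N+1), f (φ^[j] x) ≤ f x + garsia φ f N (φ x) := by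
        rw [Finset.sum_range_succ']
        simp only [Function.iterate_succ_apply, Function.iterate_zero_apply]
        have := sum_le_garsia (φ := φ) (f := f) N (φ x)
        linarith
      show 0 < f x + garsia φ f N (φ x)
      linarith
  have hnull : μ ((⋃ N, E N)ᶜ) = 0 := ae_iff.1 hsub
  have hunion : ∫ x in ⋃ N, E N, f x ∂μ = ∫ x, f x ∂μ := by
    rw [← integral_add_compl (MeasurableSet.iUnion hEm) hfi,
      setIntegral_measure_zero _ hnull, add_zero]
  have htend : Tendsto (fun N => ∫ x in E N, f x ∂μ) atTop
      (𝓝 (∫ x in ⋃ N, E N, f x ∂μ)) :=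
    tendsto_setIntegral_of_monotone hEm hEmono hfi.integrableOn
  rw [← hunion]
  exact ge_of_tendsto' htend hstep

end met

/-- The central lemma: a positivity result for coboundary-dominated integrable functions. -/
theorem crux {μ : Measure α} [IsFiniteMeasure μ]
    {φ ψ : α → α} (hφm : Measurable φ) (hψm : Measurable ψ)
    (hφψ : ∀ x, φ (ψ x) = x) (hψφ : ∀ x, ψ (φ x) = x)
    (hφ : MeasurePreserving φ μ μ) (hψ : MeasurePreserving ψ μ μ)
    {g v P F : α → ℝ} (hg : ∀ x, 0 ≤ g x) (hv : Integrable v μ)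
    (hP : Integrable P μ)
    (hobst : ∀ᵐ x ∂μ, g x * v x ≤ P x + g x * v (φ x))
    (hFdef : ∀ x, F x = g (ψ x) * v x - g x * v x)
    (hF : Integrable F μ) :
    0 ≤ ∫ x, F x ∂μ + ∫ x, P x ∂μ := by
  classical
  set H : α → ℝ := fun x => F x + P x with hHdef
  have hHi : Integrable H μ := hF.add hP
  set M : α → ℝ := fun x => g x * v (φ x) with hMdef
  set v₀ : α → ℝ := hv.aemeasurable.mk v with hv₀def
  have hv₀m : Measurable v₀ := hv.aemeasurable.measurable_mk
  have hv₀e : v =ᵐ[μ] v₀ := hv.aemeasurable.ae_eq_mk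
  set F₀ : α → ℝ := hF.aemeasurable.mk F with hF₀def
  have hF₀m : Measurable F₀ := hF.aemeasurable.measurable_mk
  have hF₀e : F =ᵐ[μ] F₀ := hF.aemeasurable.ae_eq_mk
  set H₀ : α → ℝ := hHi.aemeasurable.mk H with hH₀def
  have hH₀m : Measurable H₀ := hHi.aemeasurable.measurable_mk
  have hH₀e : H =ᵐ[μ] H₀ := hHi.aemeasurable.ae_eq_mk
  have hH₀i : Integrable H₀ μ := hHi.congr hH₀e
  set Q : α → ℝ := fun x => if v₀ x = 0 then 0 else F₀ x / v₀ x with hQdef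
  have hQm : Measurable Q := Measurable.ite (hv₀m (measurableSet_singleton 0))
    measurable_const (hF₀m.div hv₀m)
  set B : ℕ → α → ℝ := fun n x => ∑ j ∈ Finset.range n, Q (φ^[j] x) with hBdef
  have hBm : ∀ n, Measurable (B n) := fun n =>
    Finset.measurable_sum _ (fun j _ => hQm.comp (hφm.iterate j))
  have hBrec : ∀ n x, B (n+1) x = Q x + B n (φ x) := by
    intro n x
    simp only [hBdef]
    rw [Finset.sum_range_succ']
    simp only [Function.iterate_succ_apply, Function.iterate_zero_apply]
    ring
  set Sinf : Set α := ⋂ (R : ℕ), ⋃ (N : ℕ), ⋂ (n : ℕ), {x | B (N + n) x ≤ -(R:ℝ)}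
    with hSinfdef
  have hSinfm : MeasurableSet Sinf := by
    apply MeasurableSet.iInter; intro R
    apply MeasurableSet.iUnion; intro N
    apply MeasurableSet.iInter; intro n
    exact measurableSet_le (hBm (N+n)) measurable_const
  have mem_Sinf : ∀ x, x ∈ Sinf ↔ ∀ R : ℕ, ∃ N : ℕ, ∀ m, N ≤ m → B m x ≤ -(R:ℝ) := by
    intro x
    simp only [hSinfdef, Set.mem_iInter, Set.mem_iUnion, Set.mem_setOf_eq]
    constructor
    · intro h R
      obtain ⟨N, hN⟩ := h R
      refine ⟨N, fun m hm => ?_⟩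
      have := hN (m - N)
      rwa [Nat.add_sub_cancel' hm] at this
    · intro h R
      obtain ⟨N, hN⟩ := h R
      exact ⟨N, fun n => hN (N + n) (Nat.le_add_right _ _)⟩
  have mem_Sinf_of_tendsto : ∀ x, Tendsto (fun n => B n x) atTop atBot → x ∈ Sinf := by
    intro x hx
    rw [mem_Sinf x]
    intro R
    obtain ⟨N, hN⟩ := (tendsto_atBot.1 hx (-(R:ℝ))).exists_forall_of_atTop
    exact ⟨N, hN⟩
  have Sinf_spec : ∀ x ∈ Sinf, ∀ R : ℝ, ∃ N : ℕ, ∀ m, N ≤ m → B m x < -R := by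
    intro x hx R
    obtain ⟨N, hN⟩ := (mem_Sinf x).1 hx (⌈R⌉₊ + 1)
    refine ⟨N, fun m hm => lt_of_le_of_lt (hN m hm) ?_⟩
    have h1 : R ≤ (⌈R⌉₊ : ℝ) := Nat.le_ceil R
    push_cast
    linarith
  have Sinf_inv : ∀ x, x ∈ Sinf ↔ φ x ∈ Sinf := by
    intro x
    rw [mem_Sinf x, mem_Sinf (φ x)]
    constructor
    · intro h R
      obtain ⟨N, hN⟩ := h (R + ⌈|Q x|⌉₊)
      refine ⟨N, fun m hm => ?_⟩
      have h1 := hN (m+1) (by omega)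
      have h2 : B m (φ x) = B (m+1) x - Q x := by rw [hBrec m x]; ring
      have h3 : |Q x| ≤ (⌈|Q x|⌉₊ : ℝ) := Nat.le_ceil _
      have h4 := neg_abs_le (Q x)
      have h5 := le_abs_self (Q x)
      push_cast at h1
      rw [h2]
      linarith
    · intro h R
      obtain ⟨N, hN⟩ := h (R + ⌈|Q x|⌉₊)
      refine ⟨N+1, fun m hm => ?_⟩
      obtain ⟨m', rfl⟩ : ∃ m', m = m' + 1 := ⟨m-1, by omega⟩
      have h1 := hN m' (by omega)
      have h2 : B (m'+1) x = Q x + B m' (φ x) := hBrec m' x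
      have h3 : |Q x| ≤ (⌈|Q x|⌉₊ : ℝ) := Nat.le_ceil _
      have h5 := le_abs_self (Q x)
      push_cast at h1
      rw [h2]
      linarith
  set Epos : Set α := ⋂ n : ℕ, (φ^[n]) ⁻¹' {x | v₀ x ≠ 0} with hEposdef
  have hEposm : MeasurableSet Epos :=
    MeasurableSet.iInter fun n =>
      (hφm.iterate n) ((hv₀m (measurableSet_singleton 0)).compl)
  have mem_Epos : ∀ x, x ∈ Epos ↔ ∀ n : ℕ, v₀ (φ^[n] x) ≠ 0 := by
    intro x
    simp only [hEposdef, Set.mem_iInter, Set.mem_preimage, Set.mem_setOf_eq]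
  have Epos_fwd : ∀ x, x ∈ Epos → φ x ∈ Epos := by
    intro x hx
    rw [mem_Epos] at hx ⊢
    intro n
    rw [← Function.iterate_succ_apply φ n x]
    exact hx (n+1)
  set W : Set α := Epos ∩ Sinf with hWdef
  have hWm : MeasurableSet W := hEposm.inter hSinfm
  have W_fwd : W ⊆ φ ⁻¹' W := by
    rintro x ⟨he, hs⟩
    exact ⟨Epos_fwd x he, (Sinf_inv x).1 hs⟩
  have hstep1 : μ (φ ⁻¹' W \ W) = 0 := by
    have hsub : φ ⁻¹' W \ W ⊆ φ ⁻¹' Epos \ Epos := by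
      rintro x ⟨⟨he, hs⟩, hx⟩
      exact ⟨he, fun hxe => hx ⟨hxe, (Sinf_inv x).2 hs⟩⟩
    apply measure_mono_null hsub
    have h1 : Epos ⊆ φ ⁻¹' Epos := fun x hx => Epos_fwd x hx
    have h2 : μ (φ ⁻¹' Epos) = μ Epos := hφ.measure_preimage hEposm.nullMeasurableSet
    have h3 := measure_diff h1 hEposm.nullMeasurableSet (measure_ne_top μ Epos)
    rw [h3, h2, tsub_self]
  have hiter2 : ∀ n : ℕ, W ⊆ (φ^[n]) ⁻¹' W := by
    intro n
    induction n with
    | zero => simp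
    | succ n ih =>
      intro x hx
      have h1 : φ^[n] x ∈ W := ih hx
      have h2 := W_fwd h1
      show φ^[n+1] x ∈ W
      rw [Function.iterate_succ_apply']
      exact h2
  have hiter1 : ∀ n : ℕ, μ ((φ^[n]) ⁻¹' W \ W) = 0 := by
    intro n
    induction n with
    | zero => simp
    | succ n ih =>
      have hsub : (φ^[n+1]) ⁻¹' W \ W
          ⊆ ((φ^[n]) ⁻¹' (φ ⁻¹' W \ W)) ∪ ((φ^[n]) ⁻¹' W \ W) := by
        rintro x ⟨hx1, hx2⟩
        by_cases hmid : φ^[n] x ∈ W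
        · exact Or.inr ⟨hmid, hx2⟩
        · refine Or.inl ⟨?_, hmid⟩
          show φ (φ^[n] x) ∈ W
          rw [← Function.iterate_succ_apply' φ n x]
          exact hx1
      apply measure_mono_null hsub
      apply measure_union_null
      · rw [(hφ.iterate n).measure_preimage (((hφm hWm).diff hWm)).nullMeasurableSet]
        exact hstep1
      · exact ih
  have hphipsi_id : ∀ (n : ℕ) (x : α), φ^[n] (ψ^[n] x) = x := by
    intro n x
    have := phi_psi_cancel hφψ n n le_rfl x
    simpa using this
  have hpsi1 : ∀ n : ℕ, μ ((ψ^[n]) ⁻¹' W \ W) = 0 := by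
    intro n
    have hset : (ψ^[n]) ⁻¹' W \ W = (ψ^[n]) ⁻¹' (W \ (φ^[n]) ⁻¹' W) := by
      ext x
      simp only [Set.mem_diff, Set.mem_preimage, hphipsi_id n x]
    rw [hset,
      (hψ.iterate n).measure_preimage (hWm.diff ((hφm.iterate n) hWm)).nullMeasurableSet]
    have h1 : W \ (φ^[n]) ⁻¹' W = ∅ := Set.diff_eq_empty.2 (hiter2 n)
    rw [h1, measure_empty]
  have hpsi2 : ∀ n : ℕ, μ (W \ (ψ^[n]) ⁻¹' W) = 0 := by
    intro n
    have hset : W \ (ψ^[n]) ⁻¹' W = (ψ^[n]) ⁻¹' ((φ^[n]) ⁻¹' W \ W) := by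
      ext x
      simp only [Set.mem_diff, Set.mem_preimage, hphipsi_id n x]
    rw [hset,
      (hψ.iterate n).measure_preimage (((hφm.iterate n) hWm).diff hWm).nullMeasurableSet]
    exact hiter1 n
  -- pointwise a.e. facts along orbits
  have hb2 : ∀ᵐ y ∂μ, M y - M (φ y) ≤ H (φ y) := by
    filter_upwards [ae_comp_mp hφ hobst] with y hy
    have hFv : F (φ y) = g y * v (φ y) - g (φ y) * v (φ y) := by
      rw [hFdef (φ y), hψφ y]
    simp only [hHdef, hMdef]
    linarith [hy, hFv]
  have hv₀i : Integrable v₀ μ := hv.congr hv₀e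
  have horb : ∀ᵐ x ∂μ,
      (∀ n : ℕ, H₀ (φ^[n] x) = H (φ^[n] x)) ∧
      (∀ n : ℕ, M (φ^[n] x) - M (φ^[n+1] x) ≤ H (φ^[n+1] x)) ∧
      (∀ n : ℕ, v₀ (φ^[n] x) = v (φ^[n] x)) ∧
      (∀ n : ℕ, F₀ (φ^[n] x) = F (φ^[n] x)) ∧
      (∀ n : ℕ, v₀ (ψ^[n] x) = v (ψ^[n] x)) ∧
      (∀ n : ℕ, F₀ (ψ^[n] x) = F (ψ^[n] x)) ∧
      Tendsto (fun n : ℕ => v₀ (φ^[n] x) / n) atTop (𝓝 0) := by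
    refine ((ae_all_iff.2 fun n => ?_).and ((ae_all_iff.2 fun n => ?_).and
      ((ae_all_iff.2 fun n => ?_).and ((ae_all_iff.2 fun n => ?_).and
      ((ae_all_iff.2 fun n => ?_).and ((ae_all_iff.2 fun n => ?_).and ?_))))))
    · exact ae_comp_mp (hφ.iterate n) (hH₀e.symm.mono fun y hy => hy)
    · have h := ae_comp_mp (hφ.iterate n) hb2
      filter_upwards [h] with x hx
      rw [Function.iterate_succ_apply']
      exact hx
    · exact ae_comp_mp (hφ.iterate n) (hv₀e.symm.mono fun y hy => hy)
    · exact ae_comp_mp (hφ.iterate n) (hF₀e.symm.mono fun y hy => hy)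
    · exact ae_comp_mp (hψ.iterate n) (hv₀e.symm.mono fun y hy => hy)
    · exact ae_comp_mp (hψ.iterate n) (hF₀e.symm.mono fun y hy => hy)
    · exact orbit_ae_tendsto hφm hφ hv₀m hv₀i
  -- the invariant exceptional set W is null
  have hWnull : μ W = 0 := by
    have hw2 : ∀ᵐ z ∂μ, ∀ n : ℕ, z ∈ W → ψ^[n] z ∈ W := by
      rw [ae_all_iff]
      intro n
      have h1 := hpsi2 n
      rw [ae_iff]
      have hset : {z | ¬(z ∈ W → ψ^[n] z ∈ W)} = W \ (ψ^[n]) ⁻¹' W := by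
        ext z
        simp only [Set.mem_setOf_eq, Set.mem_diff, Set.mem_preimage, Classical.not_imp]
      rw [hset]
      exact h1
    have hw3 : ∀ᵐ z ∂μ, z ∈ W →
        ∀ n : ℕ, g (ψ^[n] z) = g z + ∑ j ∈ Finset.range n, Q (ψ^[j] z) := by
      filter_upwards [hw2, horb] with z h2 hz hzW
      intro n
      induction n with
      | zero => simp
      | succ n ih =>
        obtain ⟨-, -, -, -, hG5, hG6, -⟩ := hz
        have hmem : ψ^[n] z ∈ W := h2 n hzW
        have hv0ne : v₀ (ψ^[n] z) ≠ 0 := by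
          have h4 := hmem.1
          rw [mem_Epos] at h4
          simpa using h4 0
        have hveq := hG5 n
        have hFeq := hG6 n
        have hvne : v (ψ^[n] z) ≠ 0 := by rw [← hveq]; exact hv0ne
        have hQv : Q (ψ^[n] z) = F (ψ^[n] z) / v (ψ^[n] z) := by
          simp only [hQdef]
          rw [if_neg hv0ne, hFeq, hveq]
        have hFd := hFdef (ψ^[n] z)
        have hgstep : g (ψ^[n+1] z) = g (ψ^[n] z) + Q (ψ^[n] z) := by
          rw [Function.iterate_succ_apply', hQv]
          field_simp
          linarith [hFd]
        rw [Finset.sum_range_succ, hgstep, ih]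
        ring
    set Tn : ℕ → α → ℝ := fun n z => ∑ j ∈ Finset.range n, Q (ψ^[j] z) with hTdef
    have hTm : ∀ n, Measurable (Tn n) := fun n =>
      Finset.measurable_sum _ (fun j _ => hQm.comp (hψm.iterate j))
    set WR : ℕ → Set α := fun R => W ∩ ⋂ n : ℕ, {z | -(R:ℝ) ≤ Tn n z} with hWRdef
    have hWsub : ∀ᵐ z ∂μ, z ∈ W → z ∈ ⋃ R : ℕ, WR R := by
      filter_upwards [hw3] with z h3 hz
      refine Set.mem_iUnion.2 ⟨⌈g z⌉₊, hz, ?_⟩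
      refine Set.mem_iInter.2 fun n => ?_
      have h := h3 hz n
      have h1 : 0 ≤ g (ψ^[n] z) := hg _
      have h2 : g z ≤ (⌈g z⌉₊ : ℝ) := Nat.le_ceil _
      show -((⌈g z⌉₊ : ℕ):ℝ) ≤ Tn n z
      simp only [hTdef]
      linarith
    have hTB : ∀ (n : ℕ) (z : α), Tn (n+1) z = B (n+1) (ψ^[n] z) := by
      intro n z
      have h1 : ∀ j ∈ Finset.range (n+1), Q (φ^[j] (ψ^[n] z)) = Q (ψ^[n - j] z) := by
        intro j hj
        rw [Finset.mem_range] at hj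
        rw [phi_psi_cancel hφψ j n (by omega) z]
      simp only [hBdef]
      rw [Finset.sum_congr rfl h1]
      have h2 := Finset.sum_range_reflect (fun j => Q (ψ^[j] z)) (n+1)
      simp only [hTdef]
      rw [← h2]
      apply Finset.sum_congr rfl
      intro j hj
      rw [Finset.mem_range] at hj
      congr 2
    have hWRnull : ∀ R : ℕ, μ (WR R) = 0 := by
      intro R
      have hSn : ∀ n : ℕ, MeasurableSet {x | -(R:ℝ) ≤ B n x} := fun n =>
        measurableSet_le measurable_const (hBm n)
      have key : ∀ n : ℕ, μ (WR R) ≤ μ (W ∩ {x | -(R:ℝ) ≤ B (n+1) x}) := by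
        intro n
        have hsub : WR R ⊆ W ∩ (ψ^[n]) ⁻¹' {x | -(R:ℝ) ≤ B (n+1) x} := by
          rintro z ⟨hzW, hzT⟩
          refine ⟨hzW, ?_⟩
          have h4 := Set.mem_iInter.1 hzT (n+1)
          show -(R:ℝ) ≤ B (n+1) (ψ^[n] z)
          rw [← hTB n z]
          exact h4
        calc μ (WR R) ≤ μ (W ∩ (ψ^[n]) ⁻¹' {x | -(R:ℝ) ≤ B (n+1) x}) := measure_mono hsub
          _ = μ ((ψ^[n]) ⁻¹' W ∩ (ψ^[n]) ⁻¹' {x | -(R:ℝ) ≤ B (n+1) x}) :=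
              measure_inter_congr (hpsi2 n) (hpsi1 n)
          _ = μ ((ψ^[n]) ⁻¹' (W ∩ {x | -(R:ℝ) ≤ B (n+1) x})) := by
              rw [← Set.preimage_inter]
          _ = μ (W ∩ {x | -(R:ℝ) ≤ B (n+1) x}) :=
              (hψ.iterate n).measure_preimage (hWm.inter (hSn (n+1))).nullMeasurableSet
      have hlim : Tendsto (fun n : ℕ => μ (W ∩ {x | -(R:ℝ) ≤ B n x})) atTop (𝓝 0) := by
        have heq : ∀ n : ℕ, μ (W ∩ {x | -(R:ℝ) ≤ B n x})
            = ∫⁻ x, Set.indicator (W ∩ {x | -(R:ℝ) ≤ B n x}) 1 x ∂μ := fun n =>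
          (lintegral_indicator_one (hWm.inter (hSn n))).symm
        have h0 : (0:ℝ≥0∞) = ∫⁻ (_ : α), (0:ℝ≥0∞) ∂μ := by simp
        rw [funext heq, h0]
        apply tendsto_lintegral_of_dominated_convergence (bound := fun _ => (1:ℝ≥0∞))
        · intro n
          exact measurable_one.indicator (hWm.inter (hSn n))
        · intro n
          refine Eventually.of_forall fun x => ?_
          by_cases hx : x ∈ W ∩ {x | -(R:ℝ) ≤ B n x}
          · rw [Set.indicator_of_mem hx]; exact le_rfl
          · rw [Set.indicator_of_notMem hx]; exact zero_le
        · rw [lintegral_one]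
          exact measure_ne_top μ _
        · refine Eventually.of_forall fun z => ?_
          by_cases hz : z ∈ W
          · obtain ⟨N, hN⟩ := Sinf_spec z hz.2 (R:ℝ)
            refine tendsto_const_nhds.congr' ?_
            filter_upwards [eventually_ge_atTop N] with n hn
            have hnot : z ∉ W ∩ {x | -(R:ℝ) ≤ B n x} := by
              rintro ⟨-, hzB⟩
              exact absurd hzB (not_le.2 (hN n hn))
            rw [Set.indicator_of_notMem hnot]
          · refine tendsto_const_nhds.congr fun n => ?_
            have hnot : z ∉ W ∩ {x | -(R:ℝ) ≤ B n x} := fun hc => hz hc.1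
            rw [Set.indicator_of_notMem hnot]
      have hshift : Tendsto (fun n : ℕ => μ (W ∩ {x | -(R:ℝ) ≤ B (n+1) x})) atTop (𝓝 0) :=
        hlim.comp (tendsto_add_atTop_nat 1)
      exact le_antisymm (ge_of_tendsto' hshift key) zero_le
    have hUnull : μ (⋃ R : ℕ, WR R) = 0 := measure_iUnion_null fun R => hWRnull R
    have h1 : μ (W \ ⋃ R : ℕ, WR R) = 0 := by
      have h2 := ae_iff.1 hWsub
      have hset : {z | ¬(z ∈ W → z ∈ ⋃ R : ℕ, WR R)} = W \ ⋃ R : ℕ, WR R := by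
        ext z
        simp only [Set.mem_setOf_eq, Set.mem_diff, Classical.not_imp]
      rw [hset] at h2
      exact h2
    refine le_antisymm ?_ zero_le
    calc μ W ≤ μ ((W \ ⋃ R : ℕ, WR R) ∪ ⋃ R : ℕ, WR R) := by
          apply measure_mono
          intro z hz
          by_cases h : z ∈ ⋃ R : ℕ, WR R
          · exact Or.inr h
          · exact Or.inl ⟨hz, h⟩
      _ ≤ μ (W \ ⋃ R : ℕ, WR R) + μ (⋃ R : ℕ, WR R) := measure_union_le _ _
      _ = 0 := by rw [h1, hUnull, add_zero]
  -- the main estimate, for every positive δ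
  have main : ∀ δ : ℝ, 0 < δ → 0 ≤ ∫ x, H₀ x ∂μ + δ * (μ Set.univ).toReal := by
    intro δ hδ
    set f : α → ℝ := fun x => H₀ x + δ with hfdef
    set BAD : Set α := {x | ∀ N : ℕ, ∑ j ∈ Finset.range N, f (φ^[j] x) ≤ 0} with hBADdef
    have hBADsub : ∀ᵐ x ∂μ, x ∈ BAD → x ∈ ⋃ N : ℕ, (φ^[N]) ⁻¹' W := by
      filter_upwards [horb] with x hx hxB
      obtain ⟨hG1, hG2, hG3, hG4, -, -, hG7⟩ := hx
      have hxB' : ∀ N : ℕ, ∑ j ∈ Finset.range N, f (φ^[j] x) ≤ 0 := hxB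
      have hsumH : ∀ K : ℕ, ∑ j ∈ Finset.range K, H (φ^[j] x) ≤ -((K:ℝ) * δ) := by
        intro K
        have h1 := hxB' K
        have h2 : ∑ j ∈ Finset.range K, f (φ^[j] x)
            = (∑ j ∈ Finset.range K, H₀ (φ^[j] x)) + (K:ℝ) * δ := by
          simp only [hfdef]
          rw [Finset.sum_add_distrib, Finset.sum_const, Finset.card_range, nsmul_eq_mul]
        have h3 : ∑ j ∈ Finset.range K, H₀ (φ^[j] x) = ∑ j ∈ Finset.range K, H (φ^[j] x) :=
          Finset.sum_congr rfl fun j _ => hG1 j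
        rw [h2, h3] at h1
        linarith
      set C : ℝ := |M x| + |H x| with hCdef
      have hC0 : 0 ≤ C := by positivity
      have hMgrow : ∀ K : ℕ, (K:ℝ) * δ - C ≤ M (φ^[K] x) := by
        intro K
        have htel := telescope (a := fun j => H (φ^[j] x)) (c := fun n => M (φ^[n] x)) hG2 K
        have hsum2 : ∑ j ∈ Finset.range K, H (φ^[j+1] x)
            = (∑ j ∈ Finset.range (K+1), H (φ^[j] x)) - H x := by
          rw [Finset.sum_range_succ']
          simp only [Function.iterate_zero_apply]
          ring
        have h4 := hsumH (K+1)
        have h5 := neg_abs_le (M x)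
        have h6 := neg_abs_le (H x)
        push_cast at h4
        simp only [Function.iterate_zero_apply] at htel
        rw [hsum2] at htel
        simp only [hCdef]
        linarith
      have hvpos : ∀ K : ℕ, (C + 1) / δ ≤ (K:ℝ) →
          0 < v (φ^[K+1] x) ∧ 0 < g (φ^[K] x)
            ∧ (K:ℝ) * δ - C ≤ g (φ^[K] x) * v (φ^[K+1] x) := by
        intro K hK
        have h1 := hMgrow K
        have h2 : 0 < (K:ℝ) * δ - C := by
          rw [div_le_iff₀ hδ] at hK
          linarith
        have hMeq : M (φ^[K] x) = g (φ^[K] x) * v (φ^[K+1] x) := by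
          simp only [hMdef]
          rw [Function.iterate_succ_apply']
        rw [hMeq] at h1
        have hMpos : 0 < g (φ^[K] x) * v (φ^[K+1] x) := lt_of_lt_of_le h2 h1
        have hgK := hg (φ^[K] x)
        have hvK : 0 < v (φ^[K+1] x) := by
          by_contra hneg
          push_neg at hneg
          nlinarith
        refine ⟨hvK, ?_, h1⟩
        by_contra hneg
        push_neg at hneg
        nlinarith
      have hgtend : Tendsto (fun K : ℕ => g (φ^[K] x)) atTop atTop := by
        rw [tendsto_atTop]
        intro b
        set R : ℝ := max b 1 with hRdef
        have hRpos : 0 < R := lt_of_lt_of_le zero_lt_one (le_max_right _ _)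
        have hbR : b ≤ R := le_max_left _ _
        have hε : (0:ℝ) < δ / (4 * R) := by positivity
        have hev : ∀ᶠ n : ℕ in atTop, |v₀ (φ^[n] x) / (n:ℝ)| < δ / (4 * R) := by
          rw [Metric.tendsto_atTop] at hG7
          obtain ⟨N, hN⟩ := hG7 (δ / (4*R)) hε
          filter_upwards [eventually_ge_atTop N] with n hn
          have h7 := hN n hn
          rwa [Real.dist_eq, sub_zero] at h7
        obtain ⟨N1, hN1⟩ := hev.exists_forall_of_atTop
        obtain ⟨N2, hN2⟩ := exists_nat_ge ((C+1)/δ)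
        obtain ⟨N3, hN3⟩ := exists_nat_ge (2*C/δ)
        filter_upwards [eventually_ge_atTop (max (max N1 N2) (max N3 1))] with K hK
        have hK1 : N1 ≤ K := le_trans (le_trans (le_max_left _ _) (le_max_left _ _)) hK
        have hK2 : N2 ≤ K := le_trans (le_trans (le_max_right _ _) (le_max_left _ _)) hK
        have hK3 : N3 ≤ K := le_trans (le_trans (le_max_left _ _) (le_max_right _ _)) hK
        have hK4 : 1 ≤ K := le_trans (le_trans (le_max_right _ _) (le_max_right _ _)) hK
        have hKr2 : (C+1)/δ ≤ (K:ℝ) := le_trans hN2 (by exact_mod_cast hK2)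
        have hKr3 : 2*C/δ ≤ (K:ℝ) := le_trans hN3 (by exact_mod_cast hK3)
        have hKr4 : (1:ℝ) ≤ (K:ℝ) := by exact_mod_cast hK4
        obtain ⟨hv1, hg1, hgv⟩ := hvpos K hKr2
        -- half bound
        have hhalf : (K:ℝ) * δ / 2 ≤ g (φ^[K] x) * v (φ^[K+1] x) := by
          rw [div_le_iff₀ hδ] at hKr3
          linarith
        -- bound on v along the orbit
        have hvb : v (φ^[K+1] x) ≤ δ * K / (2 * R) := by
          have h8 := hN1 (K+1) (by omega)
          rw [abs_div, abs_of_nonneg (by positivity : (0:ℝ) ≤ ((K+1:ℕ):ℝ))] at h8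
          rw [div_lt_iff₀ (by positivity : (0:ℝ) < ((K+1:ℕ):ℝ))] at h8
          push_cast at h8
          have h10 : v (φ^[K+1] x) ≤ |v₀ (φ^[K+1] x)| := by
            rw [← hG3 (K+1)]
            exact le_abs_self _
          calc v (φ^[K+1] x) ≤ |v₀ (φ^[K+1] x)| := h10
            _ ≤ δ / (4*R) * ((K:ℝ)+1) := le_of_lt h8
            _ ≤ δ / (4*R) * (2*(K:ℝ)) := by
                apply mul_le_mul_of_nonneg_left _ (le_of_lt hε)
                linarith
            _ = δ * K / (2 * R) := by
                field_simp
                ring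
        have hRv : R * v (φ^[K+1] x) ≤ (K:ℝ) * δ / 2 := by
          calc R * v (φ^[K+1] x) ≤ R * (δ * K / (2 * R)) :=
                mul_le_mul_of_nonneg_left hvb hRpos.le
            _ = (K:ℝ) * δ / 2 := by
                field_simp
        have hfinal : R * v (φ^[K+1] x) ≤ g (φ^[K] x) * v (φ^[K+1] x) :=
          le_trans hRv hhalf
        have : R ≤ g (φ^[K] x) := le_of_mul_le_mul_right
          (by rw [mul_comm (g (φ^[K] x))] at hfinal ⊢; exact hfinal) hv1
        linarith
      obtain ⟨N2, hN2⟩ := exists_nat_ge ((C+1)/δ)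
      refine Set.mem_iUnion.2 ⟨N2 + 2, ?_⟩
      have htail : ∀ n : ℕ, N2 + 1 ≤ n → v (φ^[n] x) ≠ 0 ∧ v₀ (φ^[n] x) ≠ 0 := by
        intro n hn
        obtain ⟨m, rfl⟩ : ∃ m, n = m + 1 := ⟨n-1, by omega⟩
        have hm' : N2 ≤ m := by omega
        have hm : (C+1)/δ ≤ (m:ℝ) := le_trans hN2 (by exact_mod_cast hm')
        have h12 := (hvpos m hm).1
        refine ⟨ne_of_gt h12, ?_⟩
        rw [hG3 (m+1)]
        exact ne_of_gt h12
      have hQtail : ∀ n : ℕ, N2 + 2 ≤ n → Q (φ^[n] x) = g (φ^[n-1] x) - g (φ^[n] x) := by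
        intro n hn
        have hv1 := (htail n (by omega)).1
        have hv2 := (htail n (by omega)).2
        have hQv : Q (φ^[n] x) = F (φ^[n] x) / v (φ^[n] x) := by
          simp only [hQdef]
          rw [if_neg hv2, hG4 n, hG3 n]
        have hFd := hFdef (φ^[n] x)
        have hpsi : ψ (φ^[n] x) = φ^[n-1] x := by
          obtain ⟨m, rfl⟩ : ∃ m, n = m + 1 := ⟨n-1, by omega⟩
          rw [psi_phi_iter hψφ m x]
          simp
        rw [hQv, hFd, hpsi]
        field_simp
      constructor
      · rw [mem_Epos]
        intro n
        rw [← Function.iterate_add_apply]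
        exact (htail (n + (N2+2)) (by omega)).2
      · apply mem_Sinf_of_tendsto
        have hrec : ∀ n : ℕ, B n (φ^[N2+2] x) = g (φ^[N2+1] x) - g (φ^[n + N2 + 1] x) := by
          intro n
          induction n with
          | zero => simp [hBdef]
          | succ n ih =>
            have hBstep : B (n+1) (φ^[N2+2] x)
                = B n (φ^[N2+2] x) + Q (φ^[n] (φ^[N2+2] x)) := by
              simp only [hBdef]
              rw [Finset.sum_range_succ]
            rw [hBstep, ih, ← Function.iterate_add_apply,
              hQtail (n + (N2+2)) (by omega)]
            have he1 : n + (N2+2) - 1 = n + N2 + 1 := by omega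
            have he2 : n + 1 + N2 + 1 = n + (N2 + 2) := by omega
            rw [he1, he2]
            ring
        rw [tendsto_atBot]
        intro b
        have h13 : ∀ᶠ K : ℕ in atTop, g (φ^[N2+1] x) - b ≤ g (φ^[K] x) :=
          tendsto_atTop.1 hgtend _
        obtain ⟨N4, hN4⟩ := h13.exists_forall_of_atTop
        filter_upwards [eventually_ge_atTop N4] with n hn
        rw [hrec n]
        have h14 := hN4 (n + N2 + 1) (by omega)
        linarith
    have hUnull : μ (⋃ N : ℕ, (φ^[N]) ⁻¹' W) = 0 :=
      measure_iUnion_null fun N => (hφ.iterate N).quasiMeasurePreserving.preimage_null hWnull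
    have hBADnull : μ BAD = 0 := by
      have h1 := ae_iff.1 hBADsub
      refine le_antisymm ?_ zero_le
      calc μ BAD
          ≤ μ ({x | ¬(x ∈ BAD → x ∈ ⋃ N : ℕ, (φ^[N]) ⁻¹' W)} ∪ ⋃ N : ℕ, (φ^[N]) ⁻¹' W) := by
            apply measure_mono
            intro x hx
            by_cases h : x ∈ ⋃ N : ℕ, (φ^[N]) ⁻¹' W
            · exact Or.inr h
            · exact Or.inl (fun hc => h (hc hx))
        _ ≤ μ {x | ¬(x ∈ BAD → x ∈ ⋃ N : ℕ, (φ^[N]) ⁻¹' W)} + μ (⋃ N : ℕ, (φ^[N]) ⁻¹' W) :=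
            measure_union_le _ _
        _ = 0 := by rw [h1, hUnull, add_zero]
    have hae : ∀ᵐ x ∂μ, ∃ N : ℕ, 0 < ∑ j ∈ Finset.range N, f (φ^[j] x) := by
      rw [ae_iff]
      have hset : {x | ¬ ∃ N : ℕ, 0 < ∑ j ∈ Finset.range N, f (φ^[j] x)} = BAD := by
        ext x
        simp only [hBADdef, Set.mem_setOf_eq, not_exists, not_lt]
      rw [hset]
      exact hBADnull
    have hfm : Measurable f := hH₀m.add measurable_const
    have hfi : Integrable f μ := hH₀i.add (integrable_const δ)
    have h := met hφm hφ hfm hfi hae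
    have hint : ∫ x, f x ∂μ = (∫ x, H₀ x ∂μ) + δ * (μ Set.univ).toReal := by
      simp only [hfdef]
      rw [integral_add hH₀i (integrable_const δ), integral_const, smul_eq_mul, measureReal_def]
      ring
    rw [hint] at h
    exact h
  -- let δ → 0
  have h0 : 0 ≤ ∫ x, H₀ x ∂μ := by
    have h1 : ∀ η : ℝ, 0 < η → 0 ≤ (∫ x, H₀ x ∂μ) + η := by
      intro η hη
      set c : ℝ := (μ Set.univ).toReal with hcdef
      have hc0 : 0 ≤ c := ENNReal.toReal_nonneg
      have h2 := main (η / (c + 1)) (by positivity)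
      have h3 : η / (c+1) * c ≤ η := by
        rw [div_mul_eq_mul_div, div_le_iff₀ (by positivity : (0:ℝ) < c + 1)]
        nlinarith
      linarith
    by_contra hneg
    push_neg at hneg
    have := h1 (-(∫ x, H₀ x ∂μ) / 2) (by linarith)
    linarith
  have hHeq : ∫ x, H₀ x ∂μ = ∫ x, F x ∂μ + ∫ x, P x ∂μ := by
    have h1 : ∫ x, H₀ x ∂μ = ∫ x, H x ∂μ := integral_congr_ae hH₀e.symm
    rw [h1, hHdef]
    exact integral_add hF hP
  linarith

end Stmt0Aux

open Stmt0Aux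

/-- The d-dimensional torus. -/
abbrev Td (d : ℕ) : Type := Fin d → AddCircle (1 : ℝ)

/-- If `m ≥ 0` solves, on `(0,T) × T^d`, the penalized equation
`∂_t m − νΔm + (1/ε)·1_A·m − (1/ε)(1_A m)(t, x−ξ) = 0`, `k ≥ 0` on `A`, and
`u` (in `L²((0,T),H¹)` with `∂_t u ∈ L²((0,T),H⁻¹)`) satisfies the single-jump
obstacle condition `u(t,x) ≤ k(x) + u(t,x+ξ)` a.e. on `A`, then
`∫∫ (∂_t m − νΔm) u + (1/ε) ∫_A k m ≥ 0`.  The time derivative `dtm` and the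
Laplacian `lapm` of `m` are given as data. -/
theorem stmt0 {d : ℕ} (T ν ε : ℝ) (hT : 0 < T) (hν : 0 < ν) (hε : 0 < ε)
    (ξ : Td d) (A : Set (ℝ × Td d)) (hA : MeasurableSet A)
    (m u : ℝ → Td d → ℝ) (k : Td d → ℝ)
    (dtm lapm : ℝ → Td d → ℝ)
    (hm_nonneg : ∀ t x, 0 ≤ m t x)
    -- the penalized PDE on (0,T) × T^d
    (hPDE : ∀ t ∈ Ioo (0 : ℝ) T, ∀ x : Td d,
      dtm t x - ν * lapm t x
        + (1 / ε) * (A.indicator (fun p : ℝ × Td d => m p.1 p.2) (t, x))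
        - (1 / ε) * (A.indicator (fun p : ℝ × Td d => m p.1 p.2) (t, x - ξ)) = 0)
    -- k ≥ 0 on A
    (hk : ∀ p ∈ A, 0 ≤ k p.2)
    -- integrability (u ∈ L²((0,T),H¹), ∂_t u ∈ L²((0,T),H⁻¹))
    (hu_mem : MemLp (fun p : ℝ × Td d => u p.1 p.2) 2
      (volume.restrict (Ioo (0 : ℝ) T ×ˢ (univ : Set (Td d)))))
    (hint1 : IntegrableOn (fun p : ℝ × Td d =>
      (dtm p.1 p.2 - ν * lapm p.1 p.2) * u p.1 p.2)
      (Ioo (0 : ℝ) T ×ˢ (univ : Set (Td d))))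
    (hint2 : IntegrableOn (fun p : ℝ × Td d => k p.2 * m p.1 p.2) A)
    -- the obstacle condition a.e. on A
    (hobst : ∀ᵐ p ∂(volume.restrict A), u p.1 p.2 ≤ k p.2 + u p.1 (p.2 + ξ)) :
    0 ≤ (∫ p in Ioo (0 : ℝ) T ×ˢ (univ : Set (Td d)),
          (dtm p.1 p.2 - ν * lapm p.1 p.2) * u p.1 p.2)
        + (1 / ε) * ∫ p in A, k p.2 * m p.1 p.2 := by
  classical
  set Ω : Set (ℝ × Td d) := Ioo (0:ℝ) T ×ˢ (univ : Set (Td d)) with hΩdef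
  have hΩm : MeasurableSet Ω := measurableSet_Ioo.prod MeasurableSet.univ
  set μ : Measure (ℝ × Td d) := volume.restrict Ω with hμdef
  set φ : ℝ × Td d → ℝ × Td d := fun p => (p.1, p.2 + ξ) with hφdef
  set ψ : ℝ × Td d → ℝ × Td d := fun p => (p.1, p.2 - ξ) with hψdef
  have hφm : Measurable φ := measurable_fst.prodMk (measurable_snd.add_const ξ)
  have hψm : Measurable ψ := by
    simp only [hψdef, sub_eq_add_neg]
    exact measurable_fst.prodMk (measurable_snd.add_const (-ξ))
  have hφψ : ∀ p, φ (ψ p) = p := by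
    intro p
    simp only [hφdef, hψdef, sub_add_cancel]
  have hψφ : ∀ p, ψ (φ p) = p := by
    intro p
    simp only [hφdef, hψdef, add_sub_cancel_right]
  -- measure preservation
  have hmpT : MeasurePreserving (fun x : Td d => x + ξ) volume volume :=
    measurePreserving_add_right volume ξ
  have hmpT' : MeasurePreserving (fun x : Td d => x - ξ) volume volume := by
    have := measurePreserving_add_right (volume : Measure (Td d)) (-ξ)
    simpa [sub_eq_add_neg] using this
  have hmpφvol : MeasurePreserving φ
      (volume : Measure (ℝ × Td d)) (volume : Measure (ℝ × Td d)) := by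
    have h1 := (MeasurePreserving.id (volume : Measure ℝ)).prod hmpT
    rw [← Measure.volume_eq_prod] at h1
    exact h1
  have hmpψvol : MeasurePreserving ψ
      (volume : Measure (ℝ × Td d)) (volume : Measure (ℝ × Td d)) := by
    have h1 := (MeasurePreserving.id (volume : Measure ℝ)).prod hmpT'
    rw [← Measure.volume_eq_prod] at h1
    exact h1
  have hpreφ : φ ⁻¹' Ω = Ω := by
    ext p
    simp [hφdef, hΩdef, Set.mem_prod]
  have hpreψ : ψ ⁻¹' Ω = Ω := by
    ext p
    simp [hψdef, hΩdef, Set.mem_prod]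
  have hmpφ : MeasurePreserving φ μ μ := by
    have h1 := hmpφvol.restrict_preimage hΩm
    rwa [hpreφ] at h1
  have hmpψ : MeasurePreserving ψ μ μ := by
    have h1 := hmpψvol.restrict_preimage hΩm
    rwa [hpreψ] at h1
  have hfin : IsFiniteMeasure μ := by
    constructor
    rw [hμdef, Measure.restrict_apply_univ]
    rw [hΩdef, Measure.volume_eq_prod, Measure.prod_prod]
    exact ENNReal.mul_lt_top (by simp [Real.volume_Ioo]) (measure_lt_top _ _)
  haveI := hfin
  -- the data for the crux lemma
  set g : ℝ × Td d → ℝ := fun p => A.indicator (fun q => m q.1 q.2) p with hgdef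
  set v : ℝ × Td d → ℝ := fun p => u p.1 p.2 with hvdef
  set Pf : ℝ × Td d → ℝ := fun p => A.indicator (fun q => k q.2 * m q.1 q.2) p with hPfdef
  set Ff : ℝ × Td d → ℝ := fun p => g (ψ p) * v p - g p * v p with hFfdef
  have hgnn : ∀ p, 0 ≤ g p := fun p =>
    Set.indicator_nonneg (fun q _ => hm_nonneg q.1 q.2) p
  have hPnn : ∀ p, 0 ≤ Pf p := fun p =>
    Set.indicator_nonneg (fun q hq => mul_nonneg (hk q hq) (hm_nonneg q.1 q.2)) p
  have hvInt : Integrable v μ := by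
    have h1 : MemLp v 1 μ := hu_mem.mono_exponent (by norm_num)
    exact memLp_one_iff_integrable.1 h1
  have hPvol : Integrable Pf volume := (integrable_indicator_iff hA).2 hint2
  have hPμ : Integrable Pf μ := hPvol.restrict
  -- the PDE rewrites the integrand
  have hpt : ∀ p ∈ Ω, (dtm p.1 p.2 - ν * lapm p.1 p.2) * u p.1 p.2 = (1/ε) * Ff p := by
    intro p hp
    have h := hPDE p.1 hp.1 p.2
    have h2 : dtm p.1 p.2 - ν * lapm p.1 p.2 = (1/ε) * g (ψ p) - (1/ε) * g p := by
      have e1 : (p.1, p.2) = p := rfl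
      have e2 : ((p.1, p.2 - ξ) : ℝ × Td d) = ψ p := rfl
      rw [e1, e2] at h
      simp only [hgdef]
      linarith
    simp only [hFfdef, hvdef]
    rw [h2]
    ring
  have hFfInt : Integrable Ff μ := by
    have h1 : IntegrableOn (fun p => (1/ε) * Ff p) Ω volume := by
      exact (IntegrableOn.congr_fun hint1 hpt hΩm)
    have h2 : Integrable (fun p => (1/ε) * Ff p) μ := h1
    have h3 := h2.const_mul ε
    apply h3.congr
    refine Eventually.of_forall fun p => ?_
    field_simp
  -- the obstacle inequality
  have hobstμ : ∀ᵐ p ∂μ, g p * v p ≤ Pf p + g p * v (φ p) := by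
    have h1 : ∀ᵐ p ∂(volume : Measure (ℝ × Td d)),
        p ∈ A → u p.1 p.2 ≤ k p.2 + u p.1 (p.2 + ξ) := (ae_restrict_iff' hA).1 hobst
    have h2 : ∀ᵐ p ∂μ, p ∈ A → u p.1 p.2 ≤ k p.2 + u p.1 (p.2 + ξ) :=
      h1.filter_mono (ae_mono Measure.restrict_le_self)
    filter_upwards [h2] with p hp
    by_cases hpA : p ∈ A
    · have h3 := hp hpA
      have h4 := hm_nonneg p.1 p.2
      have e1 : g p = m p.1 p.2 := by
        simp only [hgdef]
        exact Set.indicator_of_mem hpA _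
      have e2 : Pf p = k p.2 * m p.1 p.2 := by
        simp only [hPfdef]
        exact Set.indicator_of_mem hpA _
      have e3 : v p = u p.1 p.2 := rfl
      have e4 : v (φ p) = u p.1 (p.2 + ξ) := rfl
      rw [e1, e2, e3, e4]
      nlinarith [mul_le_mul_of_nonneg_left h3 h4]
    · have e1 : g p = 0 := by
        simp only [hgdef]
        exact Set.indicator_of_notMem hpA _
      have e2 : Pf p = 0 := by
        simp only [hPfdef]
        exact Set.indicator_of_notMem hpA _
      rw [e1, e2]
      simp
  have hcrux := crux hφm hψm hφψ hψφ hmpφ hmpψ hgnn hvInt hPμ hobstμ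
    (fun p => rfl) hFfInt
  -- assemble
  have hI1 : ∫ p in Ω, (dtm p.1 p.2 - ν * lapm p.1 p.2) * u p.1 p.2
      = (1/ε) * ∫ p, Ff p ∂μ := by
    rw [setIntegral_congr_fun hΩm hpt]
    exact integral_const_mul _ _
  have hI2 : ∫ p in A, k p.2 * m p.1 p.2 = ∫ p, Pf p ∂(volume : Measure (ℝ × Td d)) := by
    rw [hPfdef, integral_indicator hA]
  have hle : ∫ p, Pf p ∂μ ≤ ∫ p, Pf p ∂(volume : Measure (ℝ × Td d)) :=
    integral_mono_measure Measure.restrict_le_self (Eventually.of_forall hPnn) hPvol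
  have hεinv : (0:ℝ) < 1/ε := by positivity
  have hsum : 0 ≤ (∫ p, Ff p ∂μ) + ∫ p, Pf p ∂(volume : Measure (ℝ × Td d)) := by
    linarith
  calc (0:ℝ) ≤ (1/ε) * ((∫ p, Ff p ∂μ) + ∫ p, Pf p ∂(volume : Measure (ℝ × Td d))) :=
        mul_nonneg hεinv.le hsum
    _ = (1/ε) * (∫ p, Ff p ∂μ) + (1/ε) * ∫ p, Pf p ∂(volume : Measure (ℝ × Td d)) := by
        ring
    _ = (∫ p in Ω, (dtm p.1 p.2 - ν * lapm p.1 p.2) * u p.1 p.2)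
        + (1/ε) * ∫ p in A, k p.2 * m p.1 p.2 := by
        rw [hI1, hI2]
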